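/- Let G be a linearly ordered group and S a finite subset of G with |S| ≥ 3 and |S·S| ≤ 3|S| − 4. Then the subgroup of G generated by S is generated by at most |S| − 1 elements (in fact it is generated by two commuting elements, hence is abelian of rank at most 2). -/

import Mathlib

set_option linter.unusedSectionVars false

open Pointwise Finset

section FreimanOrdered

variable {G : Type*} [Group G] [LinearOrder G]
    [CovariantClass G G (· * ·) (· ≤ ·)]
    [CovariantClass G G (Function.swap (· * ·)) (· ≤ ·)]

private lemma mem_mul_le_max {T : Finset G} (hT : T.Nonempty) {u : G} (hu : u ∈ T * T) :
    u ≤ T.max' hT * T.max' hT := by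
  obtain ⟨b, hb, c, hc, rfl⟩ := Finset.mem_mul.mp hu
  exact mul_le_mul' (T.le_max' b hb) (T.le_max' c hc)

private lemma chain_bound (T : Finset G) (hT : T.Nonempty) :
    2 * T.card ≤ (T * T).card + 1 := by
  set m := T.min' hT with hm
  set M := T.max' hT with hM
  set A := T.image (fun t => m * t) with hA
  set B := T.image (fun t => t * M) with hB
  have hsub : A ∪ B ⊆ T * T := by
    intro u hu
    rcases Finset.mem_union.mp hu with h | h
    · obtain ⟨t, ht, rfl⟩ := Finset.mem_image.mp h
      exact Finset.mul_mem_mul (T.min'_mem hT) ht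
    · obtain ⟨t, ht, rfl⟩ := Finset.mem_image.mp h
      exact Finset.mul_mem_mul ht (T.max'_mem hT)
  have hcA : A.card = T.card := Finset.card_image_of_injective T (mul_right_injective m)
  have hcB : B.card = T.card := Finset.card_image_of_injective T (mul_left_injective M)
  have hint : A ∩ B ⊆ {m * M} := by
    intro u hu
    obtain ⟨huA, huB⟩ := Finset.mem_inter.mp hu
    obtain ⟨t, ht, h1⟩ := Finset.mem_image.mp huA
    obtain ⟨t', ht', h2⟩ := Finset.mem_image.mp huB
    have l1 : u ≤ m * M := by
      rw [← h1]; exact mul_le_mul_right (T.le_max' t ht) m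
    have l2 : m * M ≤ u := by
      rw [← h2]; exact mul_le_mul_left (T.min'_le t' ht') M
    exact Finset.mem_singleton.mpr (le_antisymm l1 l2)
  have h1 := Finset.card_union_add_card_inter A B
  have h2 : (A ∩ B).card ≤ 1 := le_trans (Finset.card_le_card hint) (by simp)
  have h3 : (A ∪ B).card ≤ (T * T).card := Finset.card_le_card hsub
  omega

private lemma add_three {U T : Finset G} (hUT : U ⊆ T) {a b c : G}
    (haT : a ∈ T) (hbT : b ∈ T) (hcT : c ∈ T)
    (haU : a ∉ U) (hbU : b ∉ U) (hcU : c ∉ U)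
    (hab : a < b) (hbc : b < c) : U.card + 3 ≤ T.card := by
  have hsub : U ∪ {a, b, c} ⊆ T := by
    intro u hu
    rcases Finset.mem_union.mp hu with h | h
    · exact hUT h
    · simp only [Finset.mem_insert, Finset.mem_singleton] at h
      rcases h with rfl | rfl | rfl <;> assumption
  have hdisj : Disjoint U ({a, b, c} : Finset G) := by
    rw [Finset.disjoint_right]
    intro u hu
    simp only [Finset.mem_insert, Finset.mem_singleton] at hu
    rcases hu with rfl | rfl | rfl <;> assumption
  have hcard3 : ({a, b, c} : Finset G).card = 3 := by
    rw [Finset.card_insert_of_notMem, Finset.card_insert_of_notMem, Finset.card_singleton]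
    · simp [hbc.ne]
    · simp [hab.ne, (hab.trans hbc).ne]
  have := Finset.card_le_card hsub
  rw [Finset.card_union_of_disjoint hdisj, hcard3] at this
  omega

private lemma three_in {S : Finset G} {a b : G} (ha : a ∈ S) (hb : b ∈ S) (h : a < b) :
    3 ≤ (S * S).card := by
  have hsub : ({a * a, a * b, b * b} : Finset G) ⊆ S * S := by
    intro u hu
    simp only [Finset.mem_insert, Finset.mem_singleton] at hu
    rcases hu with rfl | rfl | rfl
    exacts [Finset.mul_mem_mul ha ha, Finset.mul_mem_mul ha hb, Finset.mul_mem_mul hb hb]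
  have h1 : a * a < a * b := mul_lt_mul_right h a
  have h2 : a * b < b * b := mul_lt_mul_left h b
  have hcard3 : ({a * a, a * b, b * b} : Finset G).card = 3 := by
    rw [Finset.card_insert_of_notMem, Finset.card_insert_of_notMem, Finset.card_singleton]
    · simp [h2.ne]
    · simp [h1.ne, (h1.trans h2).ne]
  calc (3 : ℕ) = ({a * a, a * b, b * b} : Finset G).card := hcard3.symm
  _ ≤ (S * S).card := Finset.card_le_card hsub

private lemma idL (x y : G) (h : x * y = y * x) (α β γ : ℤ) :
    (y * x ^ α)⁻¹ * ((y * x ^ β) * (y * x ^ γ)) = y * x ^ (β + γ - α) := by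
  have hyx : Commute y x := h.symm
  have swap : ∀ n : ℤ, x ^ n * y = y * x ^ n := fun n => ((hyx.zpow_right n).eq).symm
  have e1 : (y * x ^ α)⁻¹ * ((y * x ^ β) * (y * x ^ γ))
      = (x ^ (-α) * x ^ β) * (y * x ^ γ) := by group
  rw [e1, ← zpow_add, ← mul_assoc, swap, mul_assoc, ← zpow_add,
    show -α + β + γ = β + γ - α from by ring]

private lemma idR (x y : G) (h : x * y = y * x) (α β γ : ℤ) :
    ((y * x ^ β) * (y * x ^ γ)) * (y * x ^ α)⁻¹ = y * x ^ (β + γ - α) := by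
  have hyx : Commute y x := h.symm
  have swap : ∀ n : ℤ, x ^ n * y = y * x ^ n := fun n => ((hyx.zpow_right n).eq).symm
  have swapinv : ∀ n : ℤ, x ^ n * y⁻¹ = y⁻¹ * x ^ n := fun n =>
    ((hyx.inv_left.zpow_right n).eq).symm
  have e1 : ((y * x ^ β) * (y * x ^ γ)) * (y * x ^ α)⁻¹
      = (y * x ^ β) * (y * (x ^ (γ + -α) * y⁻¹)) := by group
  rw [e1, swapinv]
  have e2 : (y * x ^ β) * (y * (y⁻¹ * x ^ (γ + -α))) = y * (x ^ β * x ^ (γ + -α)) := by group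
  rw [e2, ← zpow_add, show β + (γ + -α) = β + γ - α from by ring]

private theorem key (k : ℕ) : ∀ S : Finset G, S.card = k → 2 ≤ k →
    (∃ x y : G, x * y = y * x ∧ ∀ s ∈ S, ∃ n : ℤ, s = y * x ^ n) ∨
      3 * k ≤ (S * S).card + 3 := by
  induction k using Nat.strong_induction_on with
  | _ k IH =>
  intro S hScard hk2
  have hSne : S.Nonempty := Finset.card_pos.mp (by omega)
  by_cases hk3 : 3 ≤ k
  swap
  · -- base case k = 2
    right
    have h2 : S.card = 2 := by omega
    obtain ⟨a, b, hab, hSab⟩ := Finset.card_eq_two.mp h2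
    have haS : a ∈ S := by rw [hSab]; simp
    have hbS : b ∈ S := by rw [hSab]; simp
    rcases hab.lt_or_gt with h | h
    · have := three_in haS hbS h; omega
    · have := three_in hbS haS h; omega
  -- inductive case, k ≥ 3
  set v := S.max' hSne with hv
  set A := S.erase v with hA
  have hvS : v ∈ S := S.max'_mem hSne
  have hAcard : A.card = k - 1 := by rw [hA, Finset.card_erase_of_mem hvS, hScard]
  have hAS : A ⊆ S := Finset.erase_subset _ _
  have hAne : A.Nonempty := Finset.card_pos.mp (by omega)
  have hAlt : ∀ a ∈ A, a < v := fun a ha =>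
    lt_of_le_of_ne (S.le_max' a (hAS ha)) (Finset.mem_erase.mp ha).1
  have hAA_sub : A * A ⊆ S * S := Finset.mul_subset_mul hAS hAS
  set w := A.max' hAne with hw
  have hwA : w ∈ A := A.max'_mem hAne
  have hwv : w < v := hAlt w hwA
  have hwS : w ∈ S := hAS hwA
  have hAA_le : ∀ u ∈ A * A, u ≤ w * w := fun u hu => mem_mul_le_max hAne hu
  have hvw_not : v * w ∉ A * A := fun hmem' =>
    absurd (hAA_le _ hmem') (not_le.mpr (mul_lt_mul_left hwv w))
  have hwv_not : w * v ∉ A * A := fun hmem' =>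
    absurd (hAA_le _ hmem') (not_le.mpr (mul_lt_mul_right hwv w))
  have hvv_not : v * v ∉ A * A := fun hmem' =>
    absurd (hAA_le _ hmem') (not_le.mpr ((mul_lt_mul_left hwv w).trans (mul_lt_mul_right hwv v)))
  rcases IH (k - 1) (by omega) A hAcard (by omega) with ⟨x, y, hxy, hmem⟩ | hsize
  · -- Case 1 : A is a commuting coset piece
    by_cases hres : ∃ a ∈ A, (v * a ∈ A * A ∨ a * v ∈ A * A)
    · left
      obtain ⟨a, haA, hcase⟩ := hres
      obtain ⟨α, hα⟩ := hmem a haA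
      refine ⟨x, y, hxy, ?_⟩
      intro s hs
      by_cases hsv : s = v
      · rcases hcase with hmul | hmul
        · obtain ⟨b, hbA, c, hcA, hbc⟩ := Finset.mem_mul.mp hmul
          obtain ⟨β, hβ⟩ := hmem b hbA
          obtain ⟨γ, hγ⟩ := hmem c hcA
          refine ⟨β + γ - α, ?_⟩
          have hveq : s = (b * c) * a⁻¹ := by rw [hbc, hsv]; group
          rw [hveq, hα, hβ, hγ]
          exact idR x y hxy α β γ
        · obtain ⟨b, hbA, c, hcA, hbc⟩ := Finset.mem_mul.mp hmul
          obtain ⟨β, hβ⟩ := hmem b hbA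
          obtain ⟨γ, hγ⟩ := hmem c hcA
          refine ⟨β + γ - α, ?_⟩
          have hveq : s = a⁻¹ * (b * c) := by rw [hbc, hsv]; group
          rw [hveq, hα, hβ, hγ]
          exact idL x y hxy α β γ
      · exact hmem s (Finset.mem_erase.mpr ⟨hsv, hs⟩)
    · right
      push_neg at hres
      set X := S.image (fun s => v * s) with hX
      have hXsub : X ⊆ S * S := by
        intro u hu
        obtain ⟨s, hs, rfl⟩ := Finset.mem_image.mp hu
        exact Finset.mul_mem_mul hvS hs
      have hXcard : X.card = k := by
        rw [hX, Finset.card_image_of_injective S (mul_right_injective v), hScard]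
      have hdisj : Disjoint (A * A) X := by
        rw [Finset.disjoint_right]
        intro u huX huAA
        obtain ⟨s, hs, rfl⟩ := Finset.mem_image.mp huX
        by_cases hsv : s = v
        · rw [hsv] at huAA
          exact hvv_not huAA
        · exact (hres s (Finset.mem_erase.mpr ⟨hsv, hs⟩)).1 huAA
      have hchain : 2 * A.card ≤ (A * A).card + 1 := chain_bound A hAne
      have hunion : (A * A).card + X.card ≤ (S * S).card := by
        rw [← Finset.card_union_of_disjoint hdisj]
        exact Finset.card_le_card (Finset.union_subset hAA_sub hXsub)
      omega
  · -- Case 2 : |A*A| ≥ 3(k-1) - 3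
    by_cases h2a : ∃ a ∈ A, a ≠ w ∧ v * a ∉ A * A
    · right
      obtain ⟨a, haA, haw, hnot⟩ := h2a
      have haltw : a < w := lt_of_le_of_ne (A.le_max' a haA) haw
      have := add_three hAA_sub (Finset.mul_mem_mul hvS (hAS haA))
        (Finset.mul_mem_mul hvS hwS) (Finset.mul_mem_mul hvS hvS)
        hnot hvw_not hvv_not (mul_lt_mul_right haltw v) (mul_lt_mul_right hwv v)
      omega
    by_cases h2b : ∃ a ∈ A, a ≠ w ∧ a * v ∉ A * A
    · right
      obtain ⟨a, haA, haw, hnot⟩ := h2b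
      have haltw : a < w := lt_of_le_of_ne (A.le_max' a haA) haw
      have := add_three hAA_sub (Finset.mul_mem_mul (hAS haA) hvS)
        (Finset.mul_mem_mul hwS hvS) (Finset.mul_mem_mul hvS hvS)
        hnot hwv_not hvv_not (mul_lt_mul_left haltw v) (mul_lt_mul_left hwv v)
      omega
    by_cases h2c : v * w ≠ w * v
    · right
      rcases h2c.lt_or_gt with h | h
      · have := add_three hAA_sub (Finset.mul_mem_mul hvS hwS)
          (Finset.mul_mem_mul hwS hvS) (Finset.mul_mem_mul hvS hvS)
          hvw_not hwv_not hvv_not h (mul_lt_mul_left hwv v)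
        omega
      · have := add_three hAA_sub (Finset.mul_mem_mul hwS hvS)
          (Finset.mul_mem_mul hvS hwS) (Finset.mul_mem_mul hvS hvS)
          hwv_not hvw_not hvv_not h (mul_lt_mul_right hwv v)
        omega
    · -- forcing case
      left
      push_neg at h2a h2b h2c
      have hδ1 : w * (w⁻¹ * v) = v := mul_inv_cancel_left w v
      have hδ2 : (w⁻¹ * v) * w = v := by rw [mul_assoc, h2c, inv_mul_cancel_left]
      have hcommEq : (w⁻¹ * v) * w = w * (w⁻¹ * v) := hδ2.trans hδ1.symm
      have main : ∀ n : ℕ, ∀ a ∈ A, (A.filter (fun b => a < b)).card ≤ n →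
          ∃ m : ℤ, a = w * (w⁻¹ * v) ^ m := by
        intro n
        induction n with
        | zero =>
          intro a haA hcard
          have haw : a = w := by
            by_contra hne
            have hwin : w ∈ A.filter (fun b => a < b) :=
              Finset.mem_filter.mpr ⟨hwA, lt_of_le_of_ne (A.le_max' a haA) hne⟩
            have := Finset.card_pos.mpr ⟨w, hwin⟩
            omega
          exact ⟨0, by rw [haw, zpow_zero, mul_one]⟩
        | succ n ihn =>
          intro a haA hcard
          by_cases haw : a = w
          · exact ⟨0, by rw [haw, zpow_zero, mul_one]⟩
          have haltw : a < w := lt_of_le_of_ne (A.le_max' a haA) haw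
          obtain ⟨b, hbA, c, hcA, hbc⟩ := Finset.mem_mul.mp (h2a a haA haw)
          obtain ⟨b', hb'A, c', hc'A, hb'c'⟩ := Finset.mem_mul.mp (h2b a haA haw)
          have step : ∀ d ∈ A, a < d → ∃ m : ℤ, d = w * (w⁻¹ * v) ^ m := by
            intro d hdA had
            apply ihn d hdA
            have hsub2 : A.filter (fun b => d < b) ⊆ (A.filter (fun b => a < b)).erase d := by
              intro e he
              obtain ⟨heA, hde⟩ := Finset.mem_filter.mp he
              exact Finset.mem_erase.mpr ⟨ne_of_gt hde, Finset.mem_filter.mpr ⟨heA, had.trans hde⟩⟩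
            have hd_in : d ∈ A.filter (fun b => a < b) := Finset.mem_filter.mpr ⟨hdA, had⟩
            have hle2 := Finset.card_le_card hsub2
            rw [Finset.card_erase_of_mem hd_in] at hle2
            have hpos := Finset.card_pos.mpr ⟨d, hd_in⟩
            omega
          have hac : a < c := by
            by_contra hle
            push_neg at hle
            have h1 : b * c ≤ w * a := mul_le_mul' (A.le_max' b hbA) hle
            rw [hbc] at h1
            exact absurd h1 (not_le.mpr (mul_lt_mul_left hwv a))
          have hab' : a < b' := by
            by_contra hle
            push_neg at hle
            have h1 : b' * c' ≤ a * w := mul_le_mul' hle (A.le_max' c' hc'A)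
            rw [hb'c'] at h1
            exact absurd h1 (not_le.mpr (mul_lt_mul_right hwv a))
          obtain ⟨t, hct⟩ := step c hcA hac
          obtain ⟨s', hb's'⟩ := step b' hb'A hab'
          by_cases hab : a < b
          · obtain ⟨s, hbs⟩ := step b hbA hab
            refine ⟨s + t - 1, ?_⟩
            have heq : a = (w * (w⁻¹ * v))⁻¹ * (b * c) := by rw [hδ1, hbc]; group
            rw [heq, hbs, hct]
            have := idL (w⁻¹ * v) w hcommEq 1 s t
            rw [zpow_one] at this
            rw [this, show s + t - 1 = s + t - 1 from rfl]
          · push_neg at hab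
            have hac' : a < c' := by
              by_contra hle
              push_neg at hle
              have k1 : v * a < a * v := by
                have : b * c ≤ a * w := mul_le_mul' hab (A.le_max' c hcA)
                rw [hbc] at this
                exact lt_of_le_of_lt this (mul_lt_mul_right hwv a)
              have k2 : a * v < v * a := by
                have : b' * c' ≤ w * a := mul_le_mul' (A.le_max' b' hb'A) hle
                rw [hb'c'] at this
                exact lt_of_le_of_lt this (mul_lt_mul_left hwv a)
              exact lt_asymm k1 k2
            obtain ⟨t', hc't'⟩ := step c' hc'A hac'
            refine ⟨s' + t' - 1, ?_⟩
            have heq : a = (b' * c') * (w * (w⁻¹ * v))⁻¹ := by rw [hδ1, hb'c']; group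
            rw [heq, hb's', hc't']
            have := idR (w⁻¹ * v) w hcommEq 1 s' t'
            rw [zpow_one] at this
            rw [this]
      refine ⟨w⁻¹ * v, w, hcommEq, ?_⟩
      intro s hs
      by_cases hsv : s = v
      · exact ⟨1, by rw [hsv, zpow_one, hδ1]⟩
      · exact main (A.filter (fun b => s < b)).card s (Finset.mem_erase.mpr ⟨hsv, hs⟩) le_rfl

end FreimanOrdered

theorem stmt12 {G : Type*} [Group G] [LinearOrder G]
    [CovariantClass G G (· * ·) (· ≤ ·)]
    [CovariantClass G G (Function.swap (· * ·)) (· ≤ ·)]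
    (S : Finset G) (hS : 3 ≤ S.card)
    (h : (S * S).card ≤ 3 * S.card - 4) :
    (∃ A : Finset G, A.card ≤ S.card - 1 ∧
        Subgroup.closure (A : Set G) = Subgroup.closure (S : Set G)) ∧
      ∃ x y : G, x * y = y * x ∧
        Subgroup.closure (S : Set G) ≤ Subgroup.closure {x, y} := by
  have hkey := key S.card S rfl (by omega)
  have hP : ∃ x y : G, x * y = y * x ∧ ∀ s ∈ S, ∃ n : ℤ, s = y * x ^ n := by
    rcases hkey with h' | h'
    · exact h'
    · exfalso; omega
  obtain ⟨x, y, hxy, hmem⟩ := hP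
  have hSne : S.Nonempty := Finset.card_pos.mp (by omega)
  constructor
  · obtain ⟨s₀, hs₀S⟩ := hSne
    obtain ⟨n₀, hn₀⟩ := hmem s₀ hs₀S
    set E : AddSubgroup ℤ :=
      { carrier := {n : ℤ | x ^ n ∈ Subgroup.closure (S : Set G)}
        add_mem' := by
          intro p q hp hq
          simp only [Set.mem_setOf_eq, zpow_add] at *
          exact mul_mem hp hq
        zero_mem' := by
          simp only [Set.mem_setOf_eq, zpow_zero]
          exact one_mem _
        neg_mem' := by
          intro p hp
          simp only [Set.mem_setOf_eq, zpow_neg] at *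
          exact inv_mem hp } with hE
    obtain ⟨d, hd⟩ := Int.subgroup_cyclic E
    have hdE : d ∈ E := by
      rw [hd]
      exact AddSubgroup.mem_closure_singleton.mpr ⟨1, one_smul _ d⟩
    have hdcl : x ^ d ∈ Subgroup.closure (S : Set G) := hdE
    have hdiffmem : ∀ s ∈ S, ∃ c : ℤ, s = s₀ * (x ^ d) ^ c := by
      intro s hs
      obtain ⟨n, hn⟩ := hmem s hs
      have hxd : x ^ (n - n₀) = s₀⁻¹ * s := by rw [hn, hn₀]; group
      have hmemE : (n - n₀) ∈ E := by
        show x ^ (n - n₀) ∈ Subgroup.closure (S : Set G)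
        rw [hxd]
        exact mul_mem (inv_mem (Subgroup.subset_closure hs₀S)) (Subgroup.subset_closure hs)
      rw [hd] at hmemE
      obtain ⟨c, hc⟩ := AddSubgroup.mem_closure_singleton.mp hmemE
      refine ⟨c, ?_⟩
      have hzc : (x ^ d) ^ c = x ^ (n - n₀) := by
        rw [← zpow_mul]
        congr 1
        rw [← hc]
        simp [smul_eq_mul, mul_comm]
      rw [hzc, hxd, mul_inv_cancel_left]
    refine ⟨{s₀, x ^ d}, ?_, ?_⟩
    · have h1 : ({s₀, x ^ d} : Finset G).card ≤ 2 := by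
        apply le_trans (Finset.card_insert_le _ _)
        simp
      omega
    · apply le_antisymm
      · rw [Subgroup.closure_le]
        intro u hu
        simp only [Finset.coe_insert, Finset.coe_singleton, Set.mem_insert_iff,
          Set.mem_singleton_iff] at hu
        rcases hu with rfl | rfl
        · exact Subgroup.subset_closure hs₀S
        · exact hdcl
      · rw [Subgroup.closure_le]
        intro u hu
        have huS : u ∈ S := hu
        obtain ⟨c, hc⟩ := hdiffmem u huS
        rw [hc]
        have h1 : s₀ ∈ Subgroup.closure (({s₀, x ^ d} : Finset G) : Set G) :=
          Subgroup.subset_closure (by simp)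
        have h2 : x ^ d ∈ Subgroup.closure (({s₀, x ^ d} : Finset G) : Set G) :=
          Subgroup.subset_closure (by simp)
        exact mul_mem h1 (zpow_mem h2 c)
  · refine ⟨x, y, hxy, ?_⟩
    rw [Subgroup.closure_le]
    intro s hs
    have hsS : s ∈ S := hs
    obtain ⟨n, hn⟩ := hmem s hsS
    rw [hn]
    have hx : x ∈ Subgroup.closure ({x, y} : Set G) := Subgroup.subset_closure (by simp)
    have hy : y ∈ Subgroup.closure ({x, y} : Set G) := Subgroup.subset_closure (by simp)
    exact mul_mem hy (zpow_mem hx n)
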